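/- Let G = ⋃_n K(n) be an increasing union of compact metrizable groups acting measurably on a standard Borel space X, ρ a positive jointly measurable cocycle, and ν a probability measure with Radon–Nikodym cocycle ρ. If A is a Borel set almost invariant under G with respect to ν (ν(A △ T_g A) = 0 for all g ∈ G), then there exists a G-invariant Borel set Ã with ν(A △ Ã) = 0. -/

import Mathlib

open MeasureTheory Set

open ENNReal

/-- For an action of an inductively compact group, every ν-almost-invariant Borel set
coincides, up to a ν-null set, with a genuinely G-invariant Borel set. -/
theorem stmt13 {G X : Type*} [Group G] [TopologicalSpace G] [IsTopologicalGroup G]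
    [MeasurableSpace G] [BorelSpace G]
    [MeasurableSpace X] [StandardBorelSpace X]
    (K : ℕ → Subgroup G) (hKmono : Monotone K)
    (hKcompact : ∀ n, IsCompact (K n : Set G))
    (hKmetr : ∀ n, TopologicalSpace.MetrizableSpace (K n))
    (hKunion : (⋃ n, (K n : Set G)) = Set.univ)
    (μ : ℕ → Measure G) (hμprob : ∀ n, IsProbabilityMeasure (μ n))
    (hμsupp : ∀ n, μ n (K n : Set G) = 1)
    (hμinv : ∀ n, ∀ g ∈ K n, (μ n).map (fun k => g * k) = μ n)
    (T : G → X → X) (hTmeas : Measurable fun p : G × X => T p.1 p.2)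
    (hT1 : ∀ x, T 1 x = x) (hTmul : ∀ g h x, T (g * h) x = T g (T h x))
    (ρ : G → X → ℝ) (hρmeas : Measurable fun p : G × X => ρ p.1 p.2)
    (hρpos : ∀ g x, 0 < ρ g x)
    (hρcoc : ∀ g h x, ρ (g * h) x = ρ g (T h x) * ρ h x)
    (ν : Measure X) [IsProbabilityMeasure ν]
    (hRN : ∀ g, ∀ A : Set X, MeasurableSet A →
      ν (T g '' A) = ∫⁻ x in A, ENNReal.ofReal (ρ g x) ∂ν)
    (A : Set X) (hA : MeasurableSet A)
    (hainv : ∀ g : G, ν (symmDiff A (T g '' A)) = 0) :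
    ∃ B : Set X, MeasurableSet B ∧ (∀ g : G, T g '' B = B) ∧
      ν (symmDiff A B) = 0 := by
  classical
  have hbij : ∀ g x, T g (T g⁻¹ x) = x := fun g x => by
    rw [← hTmul, mul_inv_cancel, hT1]
  set ind : X → ℝ≥0∞ := A.indicator (fun _ => 1) with hind
  have hindmeas : Measurable ind := measurable_one.indicator hA
  set f : ℕ → X → ℝ≥0∞ := fun n x => ∫⁻ k, ind (T k⁻¹ x) ∂ μ n with hf
  have hFmeas : Measurable fun p : G × X => ind (T p.1⁻¹ p.2) :=
    hindmeas.comp (hTmeas.comp ((measurable_fst.inv).prodMk measurable_snd))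
  have hfmeas : ∀ n, Measurable (f n) := by
    intro n
    haveI := hμprob n
    exact Measurable.lintegral_prod_left hFmeas
  set B : Set X := {x | ∃ N, ∀ n ≥ N, f n x = 1} with hB
  have hBmeas : MeasurableSet B := by
    have hBeq : B = ⋃ N, ⋂ n, ⋂ _h : n ≥ N, (f n) ⁻¹' {1} := by
      ext x; simp [hB]
    rw [hBeq]
    exact MeasurableSet.iUnion fun N => MeasurableSet.iInter fun n =>
      MeasurableSet.iInter fun _ => (hfmeas n) (measurableSet_singleton 1)
  -- exact invariance of f n under K n
  have key : ∀ n, ∀ g ∈ K n, ∀ x, f n (T g x) = f n x := by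
    intro n g hg x
    have hmeas1 : Measurable fun k : G => ind (T (g⁻¹ * k)⁻¹ x) :=
      hFmeas.comp ((measurable_const_mul g⁻¹).prodMk measurable_const)
    calc f n (T g x) = ∫⁻ k, ind (T (g⁻¹ * k)⁻¹ x) ∂ μ n := by
          refine lintegral_congr fun k => ?_
          rw [← hTmul]
          congr 1
          group
      _ = ∫⁻ k, ind (T (g⁻¹ * k)⁻¹ x) ∂ ((μ n).map (fun k => g * k)) := by
          rw [hμinv n g hg]
      _ = ∫⁻ k, ind (T (g⁻¹ * (g * k))⁻¹ x) ∂ μ n :=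
          lintegral_map hmeas1 (measurable_const_mul g)
      _ = f n x := by
          refine lintegral_congr fun k => ?_
          rw [inv_mul_cancel_left]
  -- B is exactly invariant
  have hmemB : ∀ g x, T g x ∈ B ↔ x ∈ B := by
    intro g x
    obtain ⟨m, hm⟩ : ∃ m, g ∈ K m := by
      have : g ∈ ⋃ n, (K n : Set G) := hKunion.symm ▸ Set.mem_univ g
      simpa using Set.mem_iUnion.mp this
    constructor
    · rintro ⟨N, hN⟩
      exact ⟨max N m, fun n hn => by
        rw [← key n g (hKmono (le_trans (le_max_right N m) hn) hm) x]
        exact hN n (le_trans (le_max_left N m) hn)⟩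
    · rintro ⟨N, hN⟩
      exact ⟨max N m, fun n hn => by
        rw [key n g (hKmono (le_trans (le_max_right N m) hn) hm) x]
        exact hN n (le_trans (le_max_left N m) hn)⟩
  have hinvB : ∀ g, T g '' B = B := by
    intro g
    ext y
    constructor
    · rintro ⟨x, hx, rfl⟩; exact (hmemB g x).mpr hx
    · intro hy
      exact ⟨T g⁻¹ y, (hmemB g⁻¹ y).mpr hy, hbij g y⟩
  have hTk_image : ∀ (k : G) (x : X), T k⁻¹ x ∈ A ↔ x ∈ T k '' A := by
    intro k x
    constructor
    · intro h; exact ⟨T k⁻¹ x, h, hbij k x⟩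
    · rintro ⟨a, ha, rfl⟩; rwa [← hTmul, inv_mul_cancel, hT1]
  -- a.e. x, f n x = ind x for all n
  have hae : ∀ᵐ x ∂ν, ∀ n, f n x = ind x := by
    rw [ae_all_iff]
    intro n
    haveI := hμprob n
    set S : Set (X × G) := symmDiff {p : X × G | T p.2⁻¹ p.1 ∈ A} {p : X × G | p.1 ∈ A}
      with hS
    have hSmeas : MeasurableSet S := by
      apply MeasurableSet.symmDiff
      · exact (hTmeas.comp ((measurable_snd.inv).prodMk measurable_fst)) hA
      · exact measurable_fst hA
    have hSnull : (ν.prod (μ n)) S = 0 := by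
      rw [Measure.prod_apply_symm hSmeas]
      have hsecnull : ∀ k : G, ν ((fun x => (x, k)) ⁻¹' S) = 0 := by
        intro k
        refine measure_mono_null (fun x hx => ?_) (hainv k)
        rcases Set.mem_symmDiff.mp hx with ⟨h1, h2⟩ | ⟨h1, h2⟩
        · exact Set.mem_symmDiff.mpr (Or.inr ⟨(hTk_image k x).mp h1, h2⟩)
        · exact Set.mem_symmDiff.mpr
            (Or.inl ⟨h1, fun hc => h2 ((hTk_image k x).mpr hc)⟩)
      simp [hsecnull]
    have hsec : ∀ᵐ x ∂ν, μ n (Prod.mk x ⁻¹' S) = 0 :=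
      (Measure.measure_prod_null hSmeas).mp hSnull
    filter_upwards [hsec] with x hx
    have haek : ∀ᵐ k ∂ μ n, ind (T k⁻¹ x) = ind x := by
      rw [ae_iff]
      refine measure_mono_null (fun k hk => ?_) hx
      simp only [mem_setOf_eq, hind] at hk
      by_cases h1 : T k⁻¹ x ∈ A <;> by_cases h2 : x ∈ A
      · simp [Set.indicator_of_mem, h1, h2] at hk
      · exact Set.mem_symmDiff.mpr (Or.inl ⟨h1, h2⟩)
      · exact Set.mem_symmDiff.mpr (Or.inr ⟨h2, h1⟩)
      · simp [Set.indicator_of_notMem, h1, h2] at hk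
    calc f n x = ∫⁻ _, ind x ∂ μ n := lintegral_congr_ae haek
      _ = ind x := by simp
  refine ⟨B, hBmeas, hinvB, ?_⟩
  have hiff : ∀ x, (∀ n, f n x = ind x) → (x ∈ A ↔ x ∈ B) := by
    intro x hx
    constructor
    · intro hxA
      exact ⟨0, fun n _ => by rw [hx n, hind]; simp [hxA]⟩
    · rintro ⟨N, hN⟩
      by_contra hxA
      have h1 := hN N le_rfl
      rw [hx N, hind] at h1
      simp [hxA] at h1
  refine measure_mono_null (fun x hx => ?_) (ae_iff.mp hae)
  intro hall
  rcases Set.mem_symmDiff.mp hx with ⟨h1, h2⟩ | ⟨h1, h2⟩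
  · exact h2 ((hiff x hall).mp h1)
  · exact h2 ((hiff x hall).mpr h1)
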